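/- The species ADF, equipped with the multiplications m_{X,Y}: ADF[X] ⊗ ADF[Y] → ADF[X ⊔ Y], F ⊗ G ↦ F ⋄ G, and the unit • ∈ ADF[∅], is a twisted algebra: (i) equivariance: for any bijections σ: X → X' and τ: Y → Y' of finite sets, m_{X',Y'} ∘ (ADF[σ] ⊗ ADF[τ]) = ADF[σ ⊔ τ] ∘ m_{X,Y}; (ii) associativity: (F ⋄ G) ⋄ H = F ⋄ (G ⋄ H) for all F ∈ ADF[X], G ∈ ADF[Y], H ∈ ADF[Z] with X, Y, Z pairwise disjoint; (iii) unitality: • ⋄ F = F = F ⋄ • for all F ∈ ADF[X]. -/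

import Mathlib

/-!
Preamble: angularly decorated planar rooted trees and forests, the species `ADF` of
pure angularly decorated forests, the product `⋄`, the grafting operator `B⁺`,
and the augmentation `ε`, following Foissy–Guo–Peng–Xie–Zhang,
"Species of Rota-Baxter algebras by rooted trees, twisted bialgebras and Fock functors".
-/

attribute [local instance 10] Classical.propDecidable

-- Angularly decorated planar rooted trees (`ATree`) and forests (`AForest`) with
-- angles decorated by elements of `E`.
mutual
  inductive ATree (E : Type) : Type where
    | leaf : ATree E
    | graft : AForest E → ATree E
  inductive AForest (E : Type) : Type where
    | single : ATree E → AForest E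
    | cons : ATree E → E → AForest E → AForest E
end

mutual
  /-- The depth of an angularly decorated tree. -/
  def ATree.depth {E : Type} : ATree E → ℕ
    | .leaf => 0
    | .graft F => AForest.depth F + 1
  /-- The depth of an angularly decorated forest. -/
  def AForest.depth {E : Type} : AForest E → ℕ
    | .single T => ATree.depth T
    | .cons T _ G => max (ATree.depth T) (AForest.depth G)
end

mutual
  /-- The list of angle decorations of a tree, from left to right. -/
  def ATree.decs {E : Type} : ATree E → List E
    | .leaf => []
    | .graft F => AForest.decs F
  /-- The list of angle decorations of a forest, from left to right. -/
  def AForest.decs {E : Type} : AForest E → List E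
    | .single T => ATree.decs T
    | .cons T x G => ATree.decs T ++ x :: AForest.decs G
end

mutual
  /-- Relabelling the angle decorations of a tree along a map. -/
  def ATree.relabel {E E' : Type} (f : E → E') : ATree E → ATree E'
    | .leaf => .leaf
    | .graft F => .graft (AForest.relabel f F)
  /-- Relabelling the angle decorations of a forest along a map. -/
  def AForest.relabel {E E' : Type} (f : E → E') : AForest E → AForest E'
    | .single T => .single (ATree.relabel f T)
    | .cons T x G => .cons (ATree.relabel f T) (f x) (AForest.relabel f G)
end

/-- The single-vertex tree `•`, as a forest. -/
def bulletF (E : Type) : AForest E := .single .leaf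

/-- The product `⋄` of angularly decorated forests, with values in linear combinations
of angularly decorated forests.  It is defined by induction on the sum of depths:
`• ⋄ F' = F'`, `F ⋄ • = F`,
`(T x G) ⋄ F' = T x (G ⋄ F')`,
and for trees `B⁺(F) ⋄ B⁺(F') = B⁺(B⁺(F) ⋄ F') + B⁺(F ⋄ B⁺(F')) + λ B⁺(F ⋄ F')`,
placed back into the surrounding forest. -/
noncomputable def forestMul {k : Type} [Field k] {E : Type} (lam : k) :
    AForest E → AForest E → (AForest E →₀ k)
  | .single .leaf, F' => Finsupp.single F' 1
  | F, .single .leaf => Finsupp.single F 1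
  | .cons T x G, F' =>
      Finsupp.mapDomain (fun H => AForest.cons T x H) (forestMul lam G F')
  | .single (.graft F), .cons .leaf y G' =>
      Finsupp.single (AForest.cons (ATree.graft F) y G') 1
  | .single (.graft F), .cons (.graft F') y G' =>
      Finsupp.mapDomain (fun S => AForest.cons S y G')
        (Finsupp.mapDomain ATree.graft
          (forestMul lam (AForest.single (ATree.graft F)) F' +
           forestMul lam F (AForest.single (ATree.graft F')) +
           lam • forestMul lam F F'))
  | .single (.graft F), .single (.graft F') =>
      Finsupp.mapDomain AForest.single
        (Finsupp.mapDomain ATree.graft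
          (forestMul lam (AForest.single (ATree.graft F)) F' +
           forestMul lam F (AForest.single (ATree.graft F')) +
           lam • forestMul lam F F'))
termination_by F F' => (AForest.depth F + AForest.depth F', sizeOf F + sizeOf F')
decreasing_by
  all_goals
    simp only [AForest.depth, ATree.depth, AForest.cons.sizeOf_spec, AForest.single.sizeOf_spec,
      ATree.graft.sizeOf_spec, ATree.leaf.sizeOf_spec]
    rw [Prod.lex_def]
    omega

/-- A forest over the decoration set `X` is pure if each element of `X` decorates
exactly one of its angles. -/
def IsPure {E : Type} (F : AForest E) : Prop :=
  F.decs.Nodup ∧ ∀ x : E, x ∈ F.decs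

/-- Pure angularly `X`-decorated rooted forests. -/
def PureForest (E : Type) : Type := {F : AForest E // IsPure F}

/-- The vector space spanned by all angularly `E`-decorated forests. -/
abbrev RawADF (k : Type) [Field k] (E : Type) : Type := AForest E →₀ k

/-- `ADF[X]`: the vector space with basis the pure angularly `X`-decorated forests. -/
abbrev ADF (k : Type) [Field k] (E : Type) : Type := PureForest E →₀ k

variable (k : Type) [Field k]

/-- The projection from the span of all forests onto `ADF[X]` (discarding non-pure forests). -/
noncomputable def toPureL (E : Type) : RawADF k E →ₗ[k] ADF k E where
  toFun f := Finsupp.subtypeDomain IsPure f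
  map_add' _ _ := Finsupp.subtypeDomain_add
  map_smul' _ _ := Finsupp.ext fun _ => rfl

/-- The inclusion of `ADF[X]` into the span of all forests. -/
noncomputable def rawOfL (E : Type) : ADF k E →ₗ[k] RawADF k E :=
  Finsupp.lmapDomain k k Subtype.val

/-- Relabelling decorations, on linear combinations of forests. -/
noncomputable def rawRelabelL {E E' : Type} (f : E → E') : RawADF k E →ₗ[k] RawADF k E' :=
  Finsupp.lmapDomain k k (AForest.relabel f)

/-- The grafting operator `B⁺` on linear combinations of forests. -/
noncomputable def rawGraftL (E : Type) : RawADF k E →ₗ[k] RawADF k E :=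
  Finsupp.lmapDomain k k (fun F => AForest.single (ATree.graft F))

/-- The Rota-Baxter operator `R_X = B⁺` on `ADF[X]`. -/
noncomputable def RadfL (E : Type) : ADF k E →ₗ[k] ADF k E :=
  (toPureL k E).comp ((rawGraftL k E).comp (rawOfL k E))

/-- `ADF[σ]`: the action of a bijection `σ : X ≃ Y` on `ADF[X]`. -/
noncomputable def ADFmapL {E E' : Type} (σ : E ≃ E') : ADF k E →ₗ[k] ADF k E' :=
  (toPureL k E').comp ((rawRelabelL k σ).comp (rawOfL k E))

/-- The augmentation `ε_X : ADF[X] → k`, the coefficient of the single-vertex tree `•`. -/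
noncomputable def epsL (E : Type) : ADF k E →ₗ[k] k :=
  (Finsupp.lapply (bulletF E)).comp (rawOfL k E)

/-- The bilinear extension of the product `⋄` to linear combinations of forests. -/
noncomputable def rawMulL {E : Type} (lam : k) : RawADF k E →ₗ[k] RawADF k E →ₗ[k] RawADF k E :=
  Finsupp.lsum k fun F =>
    LinearMap.toSpanSingleton k (RawADF k E →ₗ[k] RawADF k E)
      (Finsupp.lsum k fun G => LinearMap.toSpanSingleton k (RawADF k E) (forestMul lam F G))

/-- `ADF[X] → ADF[X ⊔ Y]`-part of the product. -/
noncomputable def inclL (X Y : Type) : ADF k X →ₗ[k] RawADF k (X ⊕ Y) :=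
  (rawRelabelL k Sum.inl).comp (rawOfL k X)

/-- `ADF[Y] → ADF[X ⊔ Y]`-part of the product. -/
noncomputable def inclR (X Y : Type) : ADF k Y →ₗ[k] RawADF k (X ⊕ Y) :=
  (rawRelabelL k Sum.inr).comp (rawOfL k Y)

/-- The multiplication `m_{X,Y} : ADF[X] ⊗ ADF[Y] → ADF[X ⊔ Y]`, `F ⊗ G ↦ F ⋄ G`
(as a bilinear map). -/
noncomputable def mulADF (lam : k) (X Y : Type) :
    ADF k X →ₗ[k] ADF k Y →ₗ[k] ADF k (X ⊕ Y) :=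
  ((((rawMulL k lam).comp (inclL k X Y)).compl₂ (inclR k X Y)).compr₂ (toPureL k (X ⊕ Y)))

theorem isPure_bulletF (E : Type) [IsEmpty E] : IsPure (bulletF E) :=
  ⟨by simp [bulletF, AForest.decs, ATree.decs], fun x => (IsEmpty.false x).elim⟩

/-- The unit `•` of `ADF`, an element of `ADF[∅]`. -/
noncomputable def bulletADF (E : Type) [IsEmpty E] : ADF k E :=
  Finsupp.single ⟨bulletF E, isPure_bulletF E⟩ 1

/-- The two-leaf forest `• x •` whose unique angle is decorated by
the unique element `x` of a singleton set `X`. -/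
def genF (E : Type) [Unique E] : AForest E :=
  .cons .leaf default (.single .leaf)

theorem isPure_genF (E : Type) [Unique E] : IsPure (genF E) := by
  constructor
  · simp [genF, AForest.decs, ATree.decs]
  · intro x
    simp [genF, AForest.decs, ATree.decs, Unique.eq_default x]

/-- The generator `• x •` of `ADF[{x}]`. -/
noncomputable def genADF (E : Type) [Unique E] : ADF k E :=
  Finsupp.single ⟨genF E, isPure_genF E⟩ 1

/-- The map `k → ADF[X]`, `c ↦ c • bullet` if `X` is empty, and `0` otherwise. -/
noncomputable def etaADF (E : Type) : k →ₗ[k] ADF k E :=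
  dite (IsEmpty E)
    (fun h => LinearMap.toSpanSingleton k (ADF k E) (@bulletADF k _ E h))
    (fun _ => 0)

variable {E E' E'' : Type} (lam : k)

/- ### Equations for `forestMul` -/

theorem forestMul_bullet_left (F : AForest E) :
    forestMul (k:=k) lam (.single .leaf) F = Finsupp.single F 1 := by
  rw [forestMul]

theorem forestMul_bullet_right (F : AForest E) :
    forestMul (k:=k) lam F (.single .leaf) = Finsupp.single F 1 := by
  cases F with
  | single T => cases T with
    | leaf => rw [forestMul]
    | graft F => (rw [forestMul]) <;> simp
  | cons T x G => (rw [forestMul]) <;> simp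

theorem forestMul_cons_left (T : ATree E) (x : E) (G F' : AForest E) :
    forestMul (k:=k) lam (.cons T x G) F' =
      Finsupp.mapDomain (fun H => AForest.cons T x H) (forestMul lam G F') := by
  cases F' with
  | single T' => cases T' with
    | leaf =>
        rw [forestMul_bullet_right, forestMul_bullet_right, Finsupp.mapDomain_single]
    | graft F' => (rw [forestMul]) <;> simp
  | cons T' y G' => (rw [forestMul]) <;> simp

theorem forestMul_graft_consLeaf (F : AForest E) (y : E) (G' : AForest E) :
    forestMul (k:=k) lam (.single (.graft F)) (.cons .leaf y G') =
      Finsupp.single (AForest.cons (ATree.graft F) y G') 1 := by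
  (rw [forestMul]) <;> simp

theorem forestMul_graft_consGraft (F : AForest E) (F' : AForest E) (y : E) (G' : AForest E) :
    forestMul (k:=k) lam (.single (.graft F)) (.cons (.graft F') y G') =
      Finsupp.mapDomain (fun S => AForest.cons S y G')
        (Finsupp.mapDomain ATree.graft
          (forestMul lam (AForest.single (ATree.graft F)) F' +
           forestMul lam F (AForest.single (ATree.graft F')) +
           lam • forestMul lam F F')) := by
  (rw [forestMul]) <;> simp

theorem forestMul_graft_graft (F : AForest E) (F' : AForest E) :
    forestMul (k:=k) lam (.single (.graft F)) (.single (.graft F')) =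
      Finsupp.mapDomain AForest.single
        (Finsupp.mapDomain ATree.graft
          (forestMul lam (AForest.single (ATree.graft F)) F' +
           forestMul lam F (AForest.single (ATree.graft F')) +
           lam • forestMul lam F F')) := by
  (rw [forestMul]) <;> simp

/- ### relabel lemmas -/

mutual
theorem ATree.relabel_comp (f : E → E') (g : E' → E'') (T : ATree E) :
    ATree.relabel g (ATree.relabel f T) = ATree.relabel (g ∘ f) T := by
  cases T with
  | leaf => rfl
  | graft F => simp [ATree.relabel, AForest.relabel_comp]
theorem AForest.relabel_comp (f : E → E') (g : E' → E'') (F : AForest E) :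
    AForest.relabel g (AForest.relabel f F) = AForest.relabel (g ∘ f) F := by
  cases F with
  | single T => simp [AForest.relabel, ATree.relabel_comp]
  | cons T x G => simp [AForest.relabel, ATree.relabel_comp, AForest.relabel_comp]
end

mutual
theorem ATree.relabel_id (T : ATree E) : ATree.relabel id T = T := by
  cases T with
  | leaf => rfl
  | graft F => simp [ATree.relabel, AForest.relabel_id]
theorem AForest.relabel_id (F : AForest E) : AForest.relabel id F = F := by
  cases F with
  | single T => simp [AForest.relabel, ATree.relabel_id]
  | cons T x G => simp [AForest.relabel, ATree.relabel_id, AForest.relabel_id]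
end

theorem AForest.relabel_congr {f g : E → E'} (h : ∀ x, f x = g x) (F : AForest E) :
    AForest.relabel f F = AForest.relabel g F := by
  have : f = g := funext h
  rw [this]

mutual
theorem ATree.decs_relabel (f : E → E') (T : ATree E) :
    (ATree.relabel f T).decs = T.decs.map f := by
  cases T with
  | leaf => rfl
  | graft F => simp [ATree.relabel, ATree.decs, AForest.decs_relabel]
theorem AForest.decs_relabel (f : E → E') (F : AForest E) :
    (AForest.relabel f F).decs = F.decs.map f := by
  cases F with
  | single T => simp [AForest.relabel, AForest.decs, ATree.decs_relabel]
  | cons T x G =>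
      simp [AForest.relabel, AForest.decs, ATree.decs_relabel, AForest.decs_relabel]
end

theorem AForest.relabel_cons_comp (f : E → E') (T : ATree E) (x : E) :
    AForest.relabel f ∘ AForest.cons T x =
      AForest.cons (T.relabel f) (f x) ∘ AForest.relabel f := rfl

theorem relabel_forestMul (f : E → E') (F G : AForest E) :
    Finsupp.mapDomain (AForest.relabel f) (forestMul (k:=k) lam F G)
      = forestMul lam (F.relabel f) (G.relabel f) := by
  match F, G with
  | .single .leaf, G =>
      rw [forestMul_bullet_left, Finsupp.mapDomain_single]
      exact (forestMul_bullet_left k lam _).symm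
  | F, .single .leaf =>
      rw [forestMul_bullet_right, Finsupp.mapDomain_single]
      exact (forestMul_bullet_right k lam _).symm
  | .cons T x G, F' =>
      rw [forestMul_cons_left, ← Finsupp.mapDomain_comp, AForest.relabel_cons_comp,
        Finsupp.mapDomain_comp, relabel_forestMul f G F']
      exact (forestMul_cons_left k lam _ _ _ _).symm
  | .single (.graft F), .cons .leaf y G' =>
      rw [forestMul_graft_consLeaf, Finsupp.mapDomain_single]
      exact (forestMul_graft_consLeaf k lam _ _ _).symm
  | .single (.graft F), .cons (.graft F') y G' =>
      have swap : ∀ (D : AForest E →₀ k),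
          Finsupp.mapDomain (ATree.relabel f) (Finsupp.mapDomain ATree.graft D) =
            Finsupp.mapDomain ATree.graft (Finsupp.mapDomain (AForest.relabel f) D) := by
        intro D
        rw [← Finsupp.mapDomain_comp, ← Finsupp.mapDomain_comp]
        apply congrFun (congrArg Finsupp.mapDomain _) D
        funext P
        simp [ATree.relabel]
      have hc : ∀ (D : ATree E →₀ k),
          Finsupp.mapDomain (AForest.relabel f)
              (Finsupp.mapDomain (fun S => AForest.cons S y G') D) =
            Finsupp.mapDomain (fun S => AForest.cons S (f y) (G'.relabel f))
              (Finsupp.mapDomain (ATree.relabel f) D) := by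
        intro D
        rw [← Finsupp.mapDomain_comp, ← Finsupp.mapDomain_comp]
        apply congrFun (congrArg Finsupp.mapDomain _) D
        funext P
        simp [AForest.relabel]
      rw [forestMul_graft_consGraft, hc, swap]
      simp only [Finsupp.mapDomain_add, Finsupp.mapDomain_smul]
      rw [relabel_forestMul f (AForest.single (ATree.graft F)) F',
        relabel_forestMul f F (AForest.single (ATree.graft F')),
        relabel_forestMul f F F']
      simp only [AForest.relabel, ATree.relabel]
      rw [forestMul_graft_consGraft]
      simp only [Finsupp.mapDomain_add, Finsupp.mapDomain_smul]
  | .single (.graft F), .single (.graft F') =>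
      have swap : ∀ (D : AForest E →₀ k),
          Finsupp.mapDomain (ATree.relabel f) (Finsupp.mapDomain ATree.graft D) =
            Finsupp.mapDomain ATree.graft (Finsupp.mapDomain (AForest.relabel f) D) := by
        intro D
        rw [← Finsupp.mapDomain_comp, ← Finsupp.mapDomain_comp]
        apply congrFun (congrArg Finsupp.mapDomain _) D
        funext P
        simp [ATree.relabel]
      have hc : ∀ (D : ATree E →₀ k),
          Finsupp.mapDomain (AForest.relabel f) (Finsupp.mapDomain AForest.single D) =
            Finsupp.mapDomain AForest.single (Finsupp.mapDomain (ATree.relabel f) D) := by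
        intro D
        rw [← Finsupp.mapDomain_comp, ← Finsupp.mapDomain_comp]
        apply congrFun (congrArg Finsupp.mapDomain _) D
        funext P
        simp [AForest.relabel]
      rw [forestMul_graft_graft, hc, swap]
      simp only [Finsupp.mapDomain_add, Finsupp.mapDomain_smul]
      rw [relabel_forestMul f (AForest.single (ATree.graft F)) F',
        relabel_forestMul f F (AForest.single (ATree.graft F')),
        relabel_forestMul f F F']
      simp only [AForest.relabel, ATree.relabel]
      rw [forestMul_graft_graft]
      simp only [Finsupp.mapDomain_add, Finsupp.mapDomain_smul]
termination_by (AForest.depth F + AForest.depth G, sizeOf F + sizeOf G)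
decreasing_by
  all_goals
    simp only [AForest.depth, ATree.depth, AForest.cons.sizeOf_spec, AForest.single.sizeOf_spec,
      ATree.graft.sizeOf_spec, ATree.leaf.sizeOf_spec]
    rw [Prod.lex_def]
    omega

theorem decs_forestMul (F G : AForest E) :
    ∀ H ∈ (forestMul (k:=k) lam F G).support, H.decs = F.decs ++ G.decs := by
  match F, G with
  | .single .leaf, G =>
      rw [forestMul_bullet_left]
      intro H hH
      rw [Finsupp.mem_support_single] at hH
      simp [hH.1, AForest.decs, ATree.decs]
  | F, .single .leaf =>
      rw [forestMul_bullet_right]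
      intro H hH
      rw [Finsupp.mem_support_single] at hH
      simp [hH.1, AForest.decs, ATree.decs]
  | .cons T x G, F' =>
      rw [forestMul_cons_left]
      intro H hH
      obtain ⟨P, hP, rfl⟩ := Finset.mem_image.mp (Finsupp.mapDomain_support hH)
      have := decs_forestMul G F' P hP
      simp [AForest.decs, this, List.append_assoc]
  | .single (.graft F), .cons .leaf y G' =>
      rw [forestMul_graft_consLeaf]
      intro H hH
      rw [Finsupp.mem_support_single] at hH
      simp [hH.1, AForest.decs, ATree.decs]
  | .single (.graft F), .cons (.graft F') y G' =>
      rw [forestMul_graft_consGraft]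
      intro H hH
      obtain ⟨S, hS, rfl⟩ := Finset.mem_image.mp (Finsupp.mapDomain_support hH)
      obtain ⟨P, hP, rfl⟩ := Finset.mem_image.mp (Finsupp.mapDomain_support hS)
      have hdP : AForest.decs P = AForest.decs F ++ AForest.decs F' := by
        have h1 := Finsupp.support_add (g₁ := forestMul (k:=k) lam (AForest.single (ATree.graft F)) F' +
           forestMul lam F (AForest.single (ATree.graft F'))) (g₂ := lam • forestMul lam F F') hP
        rcases Finset.mem_union.mp h1 with h2 | h2
        · rcases Finset.mem_union.mp (Finsupp.support_add h2) with h3 | h3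
          · have := decs_forestMul (AForest.single (ATree.graft F)) F' P h3
            simpa [AForest.decs, ATree.decs] using this
          · have := decs_forestMul F (AForest.single (ATree.graft F')) P h3
            simpa [AForest.decs, ATree.decs] using this
        · have h3 := Finsupp.support_smul h2
          have := decs_forestMul F F' P h3
          simpa [AForest.decs, ATree.decs] using this
      simp [AForest.decs, ATree.decs, hdP, List.append_assoc]
  | .single (.graft F), .single (.graft F') =>
      rw [forestMul_graft_graft]
      intro H hH
      obtain ⟨S, hS, rfl⟩ := Finset.mem_image.mp (Finsupp.mapDomain_support hH)
      obtain ⟨P, hP, rfl⟩ := Finset.mem_image.mp (Finsupp.mapDomain_support hS)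
      have hdP : AForest.decs P = AForest.decs F ++ AForest.decs F' := by
        have h1 := Finsupp.support_add (g₁ := forestMul (k:=k) lam (AForest.single (ATree.graft F)) F' +
           forestMul lam F (AForest.single (ATree.graft F'))) (g₂ := lam • forestMul lam F F') hP
        rcases Finset.mem_union.mp h1 with h2 | h2
        · rcases Finset.mem_union.mp (Finsupp.support_add h2) with h3 | h3
          · have := decs_forestMul (AForest.single (ATree.graft F)) F' P h3
            simpa [AForest.decs, ATree.decs] using this
          · have := decs_forestMul F (AForest.single (ATree.graft F')) P h3
            simpa [AForest.decs, ATree.decs] using this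
        · have h3 := Finsupp.support_smul h2
          have := decs_forestMul F F' P h3
          simpa [AForest.decs, ATree.decs] using this
      simp [AForest.decs, ATree.decs, hdP, List.append_assoc]
termination_by (AForest.depth F + AForest.depth G, sizeOf F + sizeOf G)
decreasing_by
  all_goals
    simp only [AForest.depth, ATree.depth, AForest.cons.sizeOf_spec, AForest.single.sizeOf_spec,
      ATree.graft.sizeOf_spec, ATree.leaf.sizeOf_spec]
    rw [Prod.lex_def]
    omega

theorem rawMulL_single_single (F G : AForest E) :
    rawMulL k lam (Finsupp.single F (1:k)) (Finsupp.single G 1) = forestMul lam F G := by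
  simp [rawMulL, Finsupp.lsum_single, LinearMap.toSpanSingleton_apply]

theorem M_apply_left (r : RawADF k E) (H : AForest E) :
    rawMulL k lam r (Finsupp.single H 1) = r.sum fun P a => a • forestMul lam P H := by
  induction r using Finsupp.induction_linear with
  | zero => simp
  | add f g hf hg =>
      rw [map_add, LinearMap.add_apply, hf, hg,
        Finsupp.sum_add_index' (fun P => zero_smul k (forestMul lam P H))
          (fun P b₁ b₂ => add_smul b₁ b₂ (forestMul lam P H))]
  | single P a =>
      rw [Finsupp.sum_single_index (zero_smul k (forestMul lam P H))]
      have : Finsupp.single P a = a • Finsupp.single P (1:k) := by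
        rw [Finsupp.smul_single, smul_eq_mul, mul_one]
      rw [this, map_smul, LinearMap.smul_apply, rawMulL_single_single]

theorem M_apply_right (F : AForest E) (s : RawADF k E) :
    rawMulL k lam (Finsupp.single F 1) s = s.sum fun W b => b • forestMul lam F W := by
  induction s using Finsupp.induction_linear with
  | zero => simp
  | add f g hf hg =>
      rw [map_add, hf, hg,
        Finsupp.sum_add_index' (fun W => zero_smul k (forestMul lam F W))
          (fun W b₁ b₂ => add_smul b₁ b₂ (forestMul lam F W))]
  | single W b =>
      rw [Finsupp.sum_single_index (zero_smul k (forestMul lam F W))]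
      have : Finsupp.single W b = b • Finsupp.single W (1:k) := by
        rw [Finsupp.smul_single, smul_eq_mul, mul_one]
      rw [this, map_smul, rawMulL_single_single]

theorem M_bullet_left (s : RawADF k E) :
    rawMulL k lam (Finsupp.single (AForest.single .leaf) 1) s = s := by
  rw [M_apply_right]
  conv_rhs => rw [← Finsupp.sum_single s]
  exact Finsupp.sum_congr fun W _ => by
    rw [forestMul_bullet_left, Finsupp.smul_single, smul_eq_mul, mul_one]

theorem M_bullet_right (r : RawADF k E) :
    rawMulL k lam r (Finsupp.single (AForest.single .leaf) 1) = r := by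
  rw [M_apply_left]
  conv_rhs => rw [← Finsupp.sum_single r]
  exact Finsupp.sum_congr fun W _ => by
    rw [forestMul_bullet_right, Finsupp.smul_single, smul_eq_mul, mul_one]

/-- Fubini for `mapDomain`-sums. -/
theorem sum_mapDomain_comm {α β γ : Type} (r : α →₀ k) (s : β →₀ k) (c : α → β → γ) :
    (r.sum fun P a => a • Finsupp.mapDomain (fun W => c P W) s)
      = s.sum fun W b => b • Finsupp.mapDomain (fun P => c P W) r := by
  have expand : ∀ (x : α →₀ k) (y : β →₀ k),
      (x.sum fun P a => a • Finsupp.mapDomain (fun W => c P W) y)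
        = x.sum fun P a => y.sum fun W b => Finsupp.single (c P W) (a * b) := by
    intro x y
    refine Finsupp.sum_congr fun P _ => ?_
    rw [Finsupp.mapDomain, Finsupp.smul_sum]
    exact Finsupp.sum_congr fun W _ => by rw [Finsupp.smul_single, smul_eq_mul]
  rw [expand]
  have expand2 :
      (s.sum fun W b => b • Finsupp.mapDomain (fun P => c P W) r)
        = s.sum fun W b => r.sum fun P a => Finsupp.single (c P W) (a * b) := by
    refine Finsupp.sum_congr fun W _ => ?_
    rw [Finsupp.mapDomain, Finsupp.smul_sum]
    exact Finsupp.sum_congr fun P _ => by rw [Finsupp.smul_single, smul_eq_mul, mul_comm]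
  rw [expand2]
  exact Finsupp.sum_comm _ _ _

theorem sum_mapDomain_index_smul {α β : Type} (φ : α → β) (r : α →₀ k)
    (g : β → RawADF k E) :
    ((Finsupp.mapDomain φ r).sum fun P a => a • g P) = r.sum fun P a => a • g (φ P) := by
  refine Finsupp.sum_mapDomain_index (fun _ => zero_smul k _) (fun _ _ _ => add_smul _ _ _)

theorem M_cons_left (T : ATree E) (x : E) (F₂ : AForest E) (s : RawADF k E) :
    rawMulL k lam (Finsupp.single (AForest.cons T x F₂) 1) s
      = Finsupp.mapDomain (AForest.cons T x) (rawMulL k lam (Finsupp.single F₂ 1) s) := by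
  rw [M_apply_right, M_apply_right, Finsupp.mapDomain_sum]
  refine Finsupp.sum_congr fun W _ => ?_
  rw [forestMul_cons_left, Finsupp.mapDomain_smul]

theorem M_mapDomain_left (φ ψ : AForest E → AForest E) (r s : RawADF k E)
    (h : ∀ P, forestMul (k := k) lam (φ P) = fun H => Finsupp.mapDomain ψ (forestMul lam P H)) :
    True := trivial

/-- `B⁺` on a single forest, as a forest. -/
def sgF {E : Type} (F : AForest E) : AForest E := .single (.graft F)

/-- The Rota–Baxter combination appearing in the product of two grafted trees. -/
noncomputable def DGk (lam : k) {E : Type} (F G : AForest E) : RawADF k E :=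
  forestMul lam (sgF F) G + forestMul lam F (sgF G) + lam • forestMul lam F G

theorem forestMul_sg_cons (F F' : AForest E) (y : E) (G' : AForest E) :
    forestMul (k:=k) lam (sgF F) (.cons (.graft F') y G') =
      Finsupp.mapDomain (fun S => AForest.cons (ATree.graft S) y G') (DGk k lam F F') := by
  rw [show sgF F = AForest.single (ATree.graft F) from rfl, forestMul_graft_consGraft,
    ← Finsupp.mapDomain_comp]
  rfl

theorem forestMul_sg_sg (F F' : AForest E) :
    forestMul (k:=k) lam (sgF F) (sgF F') =
      Finsupp.mapDomain sgF (DGk k lam F F') := by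
  rw [show sgF F = AForest.single (ATree.graft F) from rfl,
    show sgF F' = AForest.single (ATree.graft F') from rfl, forestMul_graft_graft,
    ← Finsupp.mapDomain_comp]
  rfl

theorem inner_assoc (F₁ G₁ H₁ : AForest E)
    (h1 : rawMulL k lam (forestMul lam (sgF F₁) (sgF G₁)) (Finsupp.single H₁ 1)
        = rawMulL k lam (Finsupp.single (sgF F₁) 1) (forestMul lam (sgF G₁) H₁))
    (h2 : rawMulL k lam (forestMul lam (sgF F₁) G₁) (Finsupp.single (sgF H₁) 1)
        = rawMulL k lam (Finsupp.single (sgF F₁) 1) (forestMul lam G₁ (sgF H₁)))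
    (h3 : rawMulL k lam (forestMul lam F₁ (sgF G₁)) (Finsupp.single (sgF H₁) 1)
        = rawMulL k lam (Finsupp.single F₁ 1) (forestMul lam (sgF G₁) (sgF H₁)))
    (h4 : rawMulL k lam (forestMul lam F₁ G₁) (Finsupp.single (sgF H₁) 1)
        = rawMulL k lam (Finsupp.single F₁ 1) (forestMul lam G₁ (sgF H₁)))
    (h5 : rawMulL k lam (forestMul lam (sgF F₁) G₁) (Finsupp.single H₁ 1)
        = rawMulL k lam (Finsupp.single (sgF F₁) 1) (forestMul lam G₁ H₁))
    (h6 : rawMulL k lam (forestMul lam F₁ (sgF G₁)) (Finsupp.single H₁ 1)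
        = rawMulL k lam (Finsupp.single F₁ 1) (forestMul lam (sgF G₁) H₁))
    (h7 : rawMulL k lam (forestMul lam F₁ G₁) (Finsupp.single H₁ 1)
        = rawMulL k lam (Finsupp.single F₁ 1) (forestMul lam G₁ H₁)) :
    rawMulL k lam (forestMul lam (sgF F₁) (sgF G₁)) (Finsupp.single H₁ 1)
      + rawMulL k lam (DGk k lam F₁ G₁) (Finsupp.single (sgF H₁) 1)
      + lam • rawMulL k lam (DGk k lam F₁ G₁) (Finsupp.single H₁ 1)
    = rawMulL k lam (Finsupp.single (sgF F₁) 1) (DGk k lam G₁ H₁)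
      + rawMulL k lam (Finsupp.single F₁ 1) (forestMul lam (sgF G₁) (sgF H₁))
      + lam • rawMulL k lam (Finsupp.single F₁ 1) (DGk k lam G₁ H₁) := by
  simp only [DGk, map_add, map_smul, LinearMap.add_apply, LinearMap.smul_apply,
    h1, h2, h3, h4, h5, h6, h7, smul_add]
  abel

theorem case7_general (F₁ G₁ H₁ : AForest E) (ρ : AForest E → AForest E)
    (hρ : ∀ A W, forestMul (k:=k) lam (sgF A) (ρ W) = Finsupp.mapDomain ρ (DGk k lam A W))
    (h1 : rawMulL k lam (forestMul lam (sgF F₁) (sgF G₁)) (Finsupp.single H₁ 1)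
        = rawMulL k lam (Finsupp.single (sgF F₁) 1) (forestMul lam (sgF G₁) H₁))
    (h2 : rawMulL k lam (forestMul lam (sgF F₁) G₁) (Finsupp.single (sgF H₁) 1)
        = rawMulL k lam (Finsupp.single (sgF F₁) 1) (forestMul lam G₁ (sgF H₁)))
    (h3 : rawMulL k lam (forestMul lam F₁ (sgF G₁)) (Finsupp.single (sgF H₁) 1)
        = rawMulL k lam (Finsupp.single F₁ 1) (forestMul lam (sgF G₁) (sgF H₁)))
    (h4 : rawMulL k lam (forestMul lam F₁ G₁) (Finsupp.single (sgF H₁) 1)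
        = rawMulL k lam (Finsupp.single F₁ 1) (forestMul lam G₁ (sgF H₁)))
    (h5 : rawMulL k lam (forestMul lam (sgF F₁) G₁) (Finsupp.single H₁ 1)
        = rawMulL k lam (Finsupp.single (sgF F₁) 1) (forestMul lam G₁ H₁))
    (h6 : rawMulL k lam (forestMul lam F₁ (sgF G₁)) (Finsupp.single H₁ 1)
        = rawMulL k lam (Finsupp.single F₁ 1) (forestMul lam (sgF G₁) H₁))
    (h7 : rawMulL k lam (forestMul lam F₁ G₁) (Finsupp.single H₁ 1)
        = rawMulL k lam (Finsupp.single F₁ 1) (forestMul lam G₁ H₁)) :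
    rawMulL k lam (forestMul lam (sgF F₁) (sgF G₁)) (Finsupp.single (ρ H₁) 1)
      = rawMulL k lam (Finsupp.single (sgF F₁) 1) (forestMul lam (sgF G₁) (ρ H₁)) := by
  have sum_split : ∀ (r : RawADF k E) (X : AForest E → RawADF k E),
      (r.sum fun P a => a • (X P + forestMul lam P (sgF H₁) + lam • forestMul lam P H₁))
        = (r.sum fun P a => a • X P) + (r.sum fun P a => a • forestMul lam P (sgF H₁))
          + lam • (r.sum fun P a => a • forestMul lam P H₁) := by
    intro r X
    rw [Finsupp.smul_sum, ← Finsupp.sum_add, ← Finsupp.sum_add]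
    refine Finsupp.sum_congr fun P _ => ?_
    rw [smul_add, smul_add, smul_comm]
  calc rawMulL k lam (forestMul lam (sgF F₁) (sgF G₁)) (Finsupp.single (ρ H₁) 1)
      = (DGk k lam F₁ G₁).sum fun P a => a • forestMul lam (sgF P) (ρ H₁) := by
        rw [forestMul_sg_sg, M_apply_left, sum_mapDomain_index_smul]
    _ = (DGk k lam F₁ G₁).sum fun P a => a • Finsupp.mapDomain ρ (DGk k lam P H₁) :=
        Finsupp.sum_congr fun P _ => by rw [hρ]
    _ = Finsupp.mapDomain ρ ((DGk k lam F₁ G₁).sum fun P a => a • DGk k lam P H₁) := by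
        rw [Finsupp.mapDomain_sum]
        exact Finsupp.sum_congr fun P _ => by rw [Finsupp.mapDomain_smul]
    _ = Finsupp.mapDomain ρ
          (rawMulL k lam (forestMul lam (sgF F₁) (sgF G₁)) (Finsupp.single H₁ 1)
            + rawMulL k lam (DGk k lam F₁ G₁) (Finsupp.single (sgF H₁) 1)
            + lam • rawMulL k lam (DGk k lam F₁ G₁) (Finsupp.single H₁ 1)) := by
        congr 1
        rw [show (fun (P : AForest E) (a : k) => a • DGk k lam P H₁)
            = fun P a => a • (forestMul lam (sgF P) H₁ + forestMul lam P (sgF H₁)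
                + lam • forestMul lam P H₁) from rfl,
          sum_split (DGk k lam F₁ G₁) (fun P => forestMul lam (sgF P) H₁),
          forestMul_sg_sg k lam F₁ G₁,
          M_apply_left k lam (Finsupp.mapDomain sgF (DGk k lam F₁ G₁)) H₁,
          sum_mapDomain_index_smul,
          M_apply_left k lam (DGk k lam F₁ G₁) (sgF H₁),
          M_apply_left k lam (DGk k lam F₁ G₁) H₁]
    _ = Finsupp.mapDomain ρ
          (rawMulL k lam (Finsupp.single (sgF F₁) 1) (DGk k lam G₁ H₁)
            + rawMulL k lam (Finsupp.single F₁ 1) (forestMul lam (sgF G₁) (sgF H₁))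
            + lam • rawMulL k lam (Finsupp.single F₁ 1) (DGk k lam G₁ H₁)) := by
        rw [inner_assoc k lam F₁ G₁ H₁ h1 h2 h3 h4 h5 h6 h7]
    _ = Finsupp.mapDomain ρ ((DGk k lam G₁ H₁).sum fun W b => b • DGk k lam F₁ W) := by
        congr 1
        have expand : ∀ (r : RawADF k E) (Y : AForest E → RawADF k E),
            (r.sum fun W b => b • (forestMul lam (sgF F₁) W + Y W + lam • forestMul lam F₁ W))
              = (r.sum fun W b => b • forestMul lam (sgF F₁) W)
                + (r.sum fun W b => b • Y W)
                + lam • (r.sum fun W b => b • forestMul lam F₁ W) := by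
          intro r Y
          rw [Finsupp.smul_sum, ← Finsupp.sum_add, ← Finsupp.sum_add]
          refine Finsupp.sum_congr fun W _ => ?_
          rw [smul_add, smul_add, smul_comm]
        rw [show (fun (W : AForest E) (b : k) => b • DGk k lam F₁ W)
            = fun W b => b • (forestMul lam (sgF F₁) W + forestMul lam F₁ (sgF W)
                + lam • forestMul lam F₁ W) from rfl,
          expand (DGk k lam G₁ H₁) (fun W => forestMul lam F₁ (sgF W)),
          forestMul_sg_sg k lam G₁ H₁,
          M_apply_right k lam (sgF F₁) (DGk k lam G₁ H₁),
          M_apply_right k lam F₁ (Finsupp.mapDomain sgF (DGk k lam G₁ H₁)),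
          sum_mapDomain_index_smul,
          M_apply_right k lam F₁ (DGk k lam G₁ H₁)]
    _ = (DGk k lam G₁ H₁).sum fun W b => b • Finsupp.mapDomain ρ (DGk k lam F₁ W) := by
        rw [Finsupp.mapDomain_sum]
        exact Finsupp.sum_congr fun W _ => Finsupp.mapDomain_smul _ _
    _ = (DGk k lam G₁ H₁).sum fun W b => b • forestMul lam (sgF F₁) (ρ W) :=
        Finsupp.sum_congr fun W _ => by rw [hρ]
    _ = rawMulL k lam (Finsupp.single (sgF F₁) 1) (forestMul lam (sgF G₁) (ρ H₁)) := by
        rw [hρ G₁ H₁, M_apply_right, sum_mapDomain_index_smul]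

theorem forestMul_assoc (F G H : AForest E) :
    rawMulL k lam (forestMul lam F G) (Finsupp.single H 1)
      = rawMulL k lam (Finsupp.single F 1) (forestMul lam G H) := by
  match F, G, H with
  | .single .leaf, G, H =>
      rw [forestMul_bullet_left, rawMulL_single_single, M_bullet_left]
  | F, .single .leaf, H =>
      rw [forestMul_bullet_right, forestMul_bullet_left]
  | F, G, .single .leaf =>
      rw [M_bullet_right, forestMul_bullet_right, rawMulL_single_single]
  | .cons T x F₂, G, H =>
      have hl : rawMulL k lam (Finsupp.mapDomain (AForest.cons T x) (forestMul lam F₂ G))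
            (Finsupp.single H 1)
          = Finsupp.mapDomain (AForest.cons T x)
              (rawMulL k lam (forestMul lam F₂ G) (Finsupp.single H 1)) := by
        rw [M_apply_left, M_apply_left, sum_mapDomain_index_smul, Finsupp.mapDomain_sum]
        exact Finsupp.sum_congr fun P _ => by
          rw [forestMul_cons_left, Finsupp.mapDomain_smul]
      rw [forestMul_cons_left, hl, forestMul_assoc F₂ G H, ← M_cons_left]
  | .single (.graft F₁), .cons .leaf y G₂, H =>
      rw [forestMul_graft_consLeaf, rawMulL_single_single,
        forestMul_cons_left k lam (ATree.graft F₁) y G₂ H,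
        forestMul_cons_left k lam ATree.leaf y G₂ H,
        M_apply_right, sum_mapDomain_index_smul, Finsupp.mapDomain]
      exact Finsupp.sum_congr fun W _ => by
        rw [forestMul_graft_consLeaf, Finsupp.smul_single, smul_eq_mul, mul_one]
  | .single (.graft F₁), .cons (.graft G₁) y G₂, H =>
      rw [show AForest.single (ATree.graft F₁) = sgF F₁ from rfl,
        forestMul_sg_cons k lam F₁ G₁ y G₂,
        M_apply_left, sum_mapDomain_index_smul,
        forestMul_cons_left k lam (ATree.graft G₁) y G₂ H,
        M_apply_right, sum_mapDomain_index_smul]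
      calc ((DGk k lam F₁ G₁).sum fun P a =>
              a • forestMul lam (AForest.cons (ATree.graft P) y G₂) H)
          = (DGk k lam F₁ G₁).sum fun P a =>
              a • Finsupp.mapDomain (fun W => AForest.cons (ATree.graft P) y W)
                (forestMul lam G₂ H) :=
            Finsupp.sum_congr fun P _ => by rw [forestMul_cons_left]
        _ = (forestMul lam G₂ H).sum fun W b =>
              b • Finsupp.mapDomain (fun P => AForest.cons (ATree.graft P) y W)
                (DGk k lam F₁ G₁) :=
            sum_mapDomain_comm k _ _ _
        _ = (forestMul lam G₂ H).sum fun W b =>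
              b • forestMul lam (sgF F₁) (AForest.cons (ATree.graft G₁) y W) :=
            Finsupp.sum_congr fun W _ => by rw [forestMul_sg_cons k lam F₁ G₁ y W]
  | .single (.graft F₁), .single (.graft G₁), .cons .leaf z H₂ =>
      rw [show forestMul lam (AForest.single (ATree.graft F₁)) (AForest.single (ATree.graft G₁))
            = Finsupp.mapDomain sgF (DGk k lam F₁ G₁) from forestMul_sg_sg k lam F₁ G₁,
        M_apply_left, sum_mapDomain_index_smul,
        forestMul_graft_consLeaf k lam G₁ z H₂, rawMulL_single_single,
        show forestMul lam (AForest.single (ATree.graft F₁)) (AForest.cons (ATree.graft G₁) z H₂)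
            = Finsupp.mapDomain (fun S => AForest.cons (ATree.graft S) z H₂) (DGk k lam F₁ G₁)
          from forestMul_sg_cons k lam F₁ G₁ z H₂, Finsupp.mapDomain]
      exact Finsupp.sum_congr fun P _ => by
        rw [show forestMul lam (sgF P) (AForest.cons ATree.leaf z H₂)
              = Finsupp.single (AForest.cons (ATree.graft P) z H₂) 1
            from forestMul_graft_consLeaf k lam P z H₂,
          Finsupp.smul_single, smul_eq_mul, mul_one]
  | .single (.graft F₁), .single (.graft G₁), .cons (.graft H₁) z H₂ =>
      exact case7_general k lam F₁ G₁ H₁ (fun S => AForest.cons (ATree.graft S) z H₂)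
        (fun A W => forestMul_sg_cons k lam A W z H₂)
        (forestMul_assoc (sgF F₁) (sgF G₁) H₁)
        (forestMul_assoc (sgF F₁) G₁ (sgF H₁))
        (forestMul_assoc F₁ (sgF G₁) (sgF H₁))
        (forestMul_assoc F₁ G₁ (sgF H₁))
        (forestMul_assoc (sgF F₁) G₁ H₁)
        (forestMul_assoc F₁ (sgF G₁) H₁)
        (forestMul_assoc F₁ G₁ H₁)
  | .single (.graft F₁), .single (.graft G₁), .single (.graft H₁) =>
      exact case7_general k lam F₁ G₁ H₁ sgF
        (fun A W => forestMul_sg_sg k lam A W)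
        (forestMul_assoc (sgF F₁) (sgF G₁) H₁)
        (forestMul_assoc (sgF F₁) G₁ (sgF H₁))
        (forestMul_assoc F₁ (sgF G₁) (sgF H₁))
        (forestMul_assoc F₁ G₁ (sgF H₁))
        (forestMul_assoc (sgF F₁) G₁ H₁)
        (forestMul_assoc F₁ (sgF G₁) H₁)
        (forestMul_assoc F₁ G₁ H₁)
termination_by (F.depth + G.depth + H.depth, sizeOf F + sizeOf G + sizeOf H)
decreasing_by
  all_goals
    simp only [AForest.depth, ATree.depth, AForest.cons.sizeOf_spec, AForest.single.sizeOf_spec,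
      ATree.graft.sizeOf_spec, ATree.leaf.sizeOf_spec, sgF]
    rw [Prod.lex_def]
    omega

theorem toPureL_apply (f : RawADF k E) :
    toPureL k E f = f.subtypeDomain IsPure := rfl

theorem rawOfL_apply (f : ADF k E) :
    rawOfL k E f = Finsupp.mapDomain Subtype.val f := rfl

theorem rawRelabelL_apply {E' : Type} (g : E → E') (f : RawADF k E) :
    rawRelabelL k g f = Finsupp.mapDomain (AForest.relabel g) f := rfl

theorem toPureL_single (F : AForest E) (h : IsPure F) :
    toPureL k E (Finsupp.single F 1) = (Finsupp.single ⟨F, h⟩ 1 : ADF k E) := by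
  ext a
  obtain ⟨a, ha⟩ := a
  show (Finsupp.single F (1:k)) a = (Finsupp.single (⟨F, h⟩ : PureForest E) (1:k)) ⟨a, ha⟩
  by_cases hfa : F = a <;> simp [Finsupp.single_apply, Subtype.mk.injEq, hfa]

theorem rawOfL_single (F : PureForest E) :
    rawOfL k E (Finsupp.single F 1) = Finsupp.single F.val 1 := by
  rw [rawOfL_apply]
  exact Finsupp.mapDomain_single

theorem rawOf_toPure (r : RawADF k E) (h : ∀ H ∈ r.support, IsPure H) :
    rawOfL k E (toPureL k E r) = r := by
  rw [rawOfL_apply, toPureL_apply]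
  ext H
  by_cases hp : IsPure H
  · have : H = (⟨H, hp⟩ : PureForest E).val := rfl
    rw [this, Finsupp.mapDomain_apply Subtype.val_injective]
    rfl
  · rw [Finsupp.mapDomain_notin_range]
    · by_cases hz : r H = 0
      · rw [hz]
      · exact absurd (h H (Finsupp.mem_support_iff.mpr hz)) hp
    · rintro ⟨⟨H', hH'⟩, rfl⟩
      exact hp hH'

theorem rawMulL_single_single' (F G : AForest E) (a b : k) :
    rawMulL k lam (Finsupp.single F a) (Finsupp.single G b) = (a * b) • forestMul lam F G := by
  simp [rawMulL, Finsupp.lsum_single, LinearMap.toSpanSingleton_apply, smul_smul]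

theorem mulADF_apply {X Y : Type} (F : ADF k X) (G : ADF k Y) :
    mulADF k lam X Y F G
      = toPureL k (X ⊕ Y) (rawMulL k lam (inclL k X Y F) (inclR k X Y G)) := rfl

theorem inclL_single {X Y : Type} (F : PureForest X) :
    inclL k X Y (Finsupp.single F 1) = Finsupp.single (F.val.relabel Sum.inl) 1 := by
  show rawRelabelL k Sum.inl (rawOfL k X (Finsupp.single F 1)) = _
  rw [rawOfL_single, rawRelabelL_apply, Finsupp.mapDomain_single]

theorem inclR_single {X Y : Type} (G : PureForest Y) :
    inclR k X Y (Finsupp.single G 1) = Finsupp.single (G.val.relabel Sum.inr) 1 := by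
  show rawRelabelL k Sum.inr (rawOfL k Y (Finsupp.single G 1)) = _
  rw [rawOfL_single, rawRelabelL_apply, Finsupp.mapDomain_single]

theorem ADFmapL_apply {E' : Type} (σ : E ≃ E') (F : ADF k E) :
    ADFmapL k σ F = toPureL k E' (rawRelabelL k σ (rawOfL k E F)) := rfl

theorem isPure_relabel {E' : Type} (σ : E ≃ E') {F : AForest E} (h : IsPure F) :
    IsPure (F.relabel σ) := by
  constructor
  · rw [AForest.decs_relabel]
    exact h.1.map σ.injective
  · intro x'
    rw [AForest.decs_relabel, List.mem_map]
    exact ⟨σ.symm x', h.2 _, by simp⟩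

theorem ADFmapL_single {E' : Type} (σ : E ≃ E') (F : AForest E) (h : IsPure F) :
    ADFmapL k σ (Finsupp.single ⟨F, h⟩ 1)
      = (Finsupp.single ⟨F.relabel σ, isPure_relabel σ h⟩ 1 : ADF k E') := by
  erw [ADFmapL_apply, rawOfL_single, rawRelabelL_apply, Finsupp.mapDomain_single,
    toPureL_single]

theorem isPure_forestMul_support (F G : AForest E)
    (hnd : (F.decs ++ G.decs).Nodup) (hc : ∀ x, x ∈ F.decs ++ G.decs) :
    ∀ H ∈ (forestMul (k:=k) lam F G).support, IsPure H := by
  intro H hH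
  have hd := decs_forestMul k lam F G H hH
  exact ⟨hd ▸ hnd, fun x => hd ▸ hc x⟩

theorem decs_rawMulL_left (r : RawADF k E) (c : AForest E) (L : List E)
    (hr : ∀ P ∈ r.support, P.decs = L) :
    ∀ H ∈ (rawMulL k lam r (Finsupp.single c 1)).support, H.decs = L ++ c.decs := by
  rw [M_apply_left]
  intro H hH
  obtain ⟨P, hP, hH2⟩ := Finset.mem_biUnion.mp (Finsupp.support_sum hH)
  have hH3 : H ∈ (forestMul (k:=k) lam P c).support := Finsupp.support_smul hH2
  rw [decs_forestMul k lam P c H hH3, hr P hP]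

theorem relabel_rawMulL {E' : Type} (f : E → E') (r s : RawADF k E) :
    Finsupp.mapDomain (AForest.relabel f) (rawMulL k lam r s)
      = rawMulL k lam (Finsupp.mapDomain (AForest.relabel f) r)
          (Finsupp.mapDomain (AForest.relabel f) s) := by
  induction r using Finsupp.induction_linear with
  | zero => simp
  | add r₁ r₂ h₁ h₂ =>
      rw [map_add, LinearMap.add_apply, Finsupp.mapDomain_add, h₁, h₂, Finsupp.mapDomain_add,
        map_add, LinearMap.add_apply]
  | single P a =>
      induction s using Finsupp.induction_linear with
      | zero => simp
      | add s₁ s₂ h₁ h₂ =>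
          rw [map_add, Finsupp.mapDomain_add, h₁, h₂, Finsupp.mapDomain_add, map_add]
      | single W b =>
          rw [rawMulL_single_single', Finsupp.mapDomain_smul, Finsupp.mapDomain_single,
            Finsupp.mapDomain_single, rawMulL_single_single', relabel_forestMul]

theorem C_sum {X Y : Type} {LX : List X} {LY : List Y}
    (hX : LX.Nodup) (hY : LY.Nodup) (hXc : ∀ x, x ∈ LX) (hYc : ∀ y, y ∈ LY) :
    (LX.map Sum.inl ++ LY.map Sum.inr : List (X ⊕ Y)).Nodup
      ∧ ∀ z, z ∈ LX.map Sum.inl ++ LY.map Sum.inr := by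
  constructor
  · rw [List.nodup_append]
    refine ⟨hX.map Sum.inl_injective, hY.map Sum.inr_injective, ?_⟩
    intro a ha b hb hab
    obtain ⟨x, _, rfl⟩ := List.mem_map.mp ha
    obtain ⟨y, _, rfl⟩ := List.mem_map.mp hb
    exact Sum.inl_ne_inr hab
  · rintro (x | y)
    · exact List.mem_append_left _ (List.mem_map_of_mem (hXc x))
    · exact List.mem_append_right _ (List.mem_map_of_mem (hYc y))

theorem inclL_apply {X Y : Type} (F : ADF k X) :
    inclL k X Y F = Finsupp.mapDomain (AForest.relabel Sum.inl) (rawOfL k X F) := rfl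

theorem inclR_apply {X Y : Type} (G : ADF k Y) :
    inclR k X Y G = Finsupp.mapDomain (AForest.relabel Sum.inr) (rawOfL k Y G) := rfl

theorem pure_pair {X Y : Type} {Fp : AForest X} {Gp : AForest Y}
    (hF : IsPure Fp) (hG : IsPure Gp) :
    ∀ H ∈ (forestMul (k:=k) lam (Fp.relabel Sum.inl) (Gp.relabel Sum.inr)).support,
      IsPure H := by
  have h := C_sum hF.1 hG.1 hF.2 hG.2
  refine isPure_forestMul_support k lam _ _ ?_ ?_ <;>
    rw [AForest.decs_relabel, AForest.decs_relabel]
  · exact h.1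
  · exact h.2

/-- Core computation for equivariance on basis elements. -/
theorem core_equiv {X X' Y Y' : Type} (σ : X ≃ X') (τ : Y ≃ Y')
    (Fp : AForest X) (hF : IsPure Fp) (Gp : AForest Y) (hG : IsPure Gp) :
    ADFmapL k (σ.sumCongr τ)
        (mulADF k lam X Y (Finsupp.single ⟨Fp, hF⟩ 1) (Finsupp.single ⟨Gp, hG⟩ 1))
      = mulADF k lam X' Y' (ADFmapL k σ (Finsupp.single ⟨Fp, hF⟩ 1))
          (ADFmapL k τ (Finsupp.single ⟨Gp, hG⟩ 1)) := by
  rw [mulADF_apply, inclL_single k ⟨Fp, hF⟩, inclR_single k ⟨Gp, hG⟩, rawMulL_single_single,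
    ADFmapL_apply, rawOf_toPure k _ (pure_pair k lam hF hG), rawRelabelL_apply,
    relabel_forestMul, ADFmapL_single, ADFmapL_single, mulADF_apply,
    inclL_single k ⟨Fp.relabel σ, isPure_relabel σ hF⟩,
    inclR_single k ⟨Gp.relabel τ, isPure_relabel τ hG⟩, rawMulL_single_single, AForest.relabel_comp, AForest.relabel_comp,
    AForest.relabel_comp, AForest.relabel_comp,
    AForest.relabel_congr (g := Sum.inl ∘ σ) (fun x => by simp) Fp,
    AForest.relabel_congr (g := Sum.inr ∘ τ) (fun y => by simp) Gp]

/-- Core computation for left unitality on basis elements. -/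
theorem core_unit_left {X : Type} (Fp : AForest X) (hF : IsPure Fp) :
    ADFmapL k (Equiv.emptySum Empty X)
        (mulADF k lam Empty X (bulletADF k Empty) (Finsupp.single ⟨Fp, hF⟩ 1))
      = Finsupp.single ⟨Fp, hF⟩ 1 := by
  have hrel : Fp.relabel Sum.inr
      = Fp.relabel (Equiv.emptySum Empty X).symm := AForest.relabel_congr (fun x => rfl) Fp
  have hpure : IsPure (Fp.relabel (Sum.inr : X → Empty ⊕ X)) := by
    rw [hrel]; exact isPure_relabel _ hF
  rw [show bulletADF k Empty = Finsupp.single ⟨bulletF Empty, isPure_bulletF Empty⟩ 1 from rfl,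
    mulADF_apply, inclL_single k ⟨bulletF Empty, isPure_bulletF Empty⟩,
    inclR_single k ⟨Fp, hF⟩,
    show (bulletF Empty).relabel (Sum.inl : Empty → Empty ⊕ X) = bulletF (Empty ⊕ X) from rfl,
    show bulletF (Empty ⊕ X) = AForest.single ATree.leaf from rfl,
    rawMulL_single_single, forestMul_bullet_left, toPureL_single k _ hpure,
    ADFmapL_single]
  refine congrArg (fun p : PureForest X => Finsupp.single p (1:k)) ?_
  refine Subtype.ext ?_
  show (Fp.relabel Sum.inr).relabel (Equiv.emptySum Empty X) = Fp
  rw [AForest.relabel_comp]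
  exact (AForest.relabel_congr (f := ⇑(Equiv.emptySum Empty X) ∘ Sum.inr) (g := id)
    (fun x => rfl) Fp).trans (AForest.relabel_id Fp)

/-- Core computation for right unitality on basis elements. -/
theorem core_unit_right {X : Type} (Fp : AForest X) (hF : IsPure Fp) :
    ADFmapL k (Equiv.sumEmpty X Empty)
        (mulADF k lam X Empty (Finsupp.single ⟨Fp, hF⟩ 1) (bulletADF k Empty))
      = Finsupp.single ⟨Fp, hF⟩ 1 := by
  have hpure : IsPure (Fp.relabel (Sum.inl : X → X ⊕ Empty)) := by
    rw [AForest.relabel_congr (f := (Sum.inl : X → X ⊕ Empty))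
      (g := ⇑(Equiv.sumEmpty X Empty).symm) (fun x => rfl) Fp]
    exact isPure_relabel _ hF
  rw [show bulletADF k Empty = Finsupp.single ⟨bulletF Empty, isPure_bulletF Empty⟩ 1 from rfl,
    mulADF_apply, inclL_single k ⟨Fp, hF⟩,
    inclR_single k ⟨bulletF Empty, isPure_bulletF Empty⟩,
    show (bulletF Empty).relabel (Sum.inr : Empty → X ⊕ Empty) = bulletF (X ⊕ Empty) from rfl,
    show bulletF (X ⊕ Empty) = AForest.single ATree.leaf from rfl,
    rawMulL_single_single, forestMul_bullet_right, toPureL_single k _ hpure,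
    ADFmapL_single]
  refine congrArg (fun p : PureForest X => Finsupp.single p (1:k)) ?_
  refine Subtype.ext ?_
  show (Fp.relabel Sum.inl).relabel (Equiv.sumEmpty X Empty) = Fp
  rw [AForest.relabel_comp]
  exact (AForest.relabel_congr (f := ⇑(Equiv.sumEmpty X Empty) ∘ Sum.inl) (g := id)
    (fun x => rfl) Fp).trans (AForest.relabel_id Fp)

/-- Core computation for associativity on basis elements. -/
theorem core_assoc {X Y Z : Type}
    (Fp : AForest X) (hF : IsPure Fp) (Gp : AForest Y) (hG : IsPure Gp)
    (Hp : AForest Z) (hH : IsPure Hp) :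
    ADFmapL k (Equiv.sumAssoc X Y Z)
        (mulADF k lam (X ⊕ Y) Z
          (mulADF k lam X Y (Finsupp.single ⟨Fp, hF⟩ 1) (Finsupp.single ⟨Gp, hG⟩ 1))
          (Finsupp.single ⟨Hp, hH⟩ 1))
      = mulADF k lam X (Y ⊕ Z) (Finsupp.single ⟨Fp, hF⟩ 1)
          (mulADF k lam Y Z (Finsupp.single ⟨Gp, hG⟩ 1) (Finsupp.single ⟨Hp, hH⟩ 1)) := by
  have hR1 := pure_pair k lam hF hG
  have hR2 := pure_pair k lam hG hH
  set A2 : AForest ((X ⊕ Y) ⊕ Z) :=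
    (Fp.relabel Sum.inl).relabel Sum.inl with hA2
  set B2 : AForest ((X ⊕ Y) ⊕ Z) :=
    (Gp.relabel Sum.inr).relabel Sum.inl with hB2
  set C2 : AForest ((X ⊕ Y) ⊕ Z) := Hp.relabel Sum.inr with hC2
  have hCs := C_sum (C_sum hF.1 hG.1 hF.2 hG.2).1 hH.1 (C_sum hF.1 hG.1 hF.2 hG.2).2 hH.2
  have hlist : (A2.decs ++ B2.decs) ++ C2.decs
      = ((Fp.decs.map Sum.inl ++ Gp.decs.map Sum.inr).map Sum.inl)
          ++ Hp.decs.map Sum.inr := by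
    simp [hA2, hB2, hC2, AForest.decs_relabel, List.map_map]
  have hQ : ∀ W ∈ (rawMulL k lam (forestMul lam A2 B2) (Finsupp.single C2 1)).support,
      IsPure W := by
    intro W hW
    have hd := decs_rawMulL_left k lam (forestMul lam A2 B2) C2 (A2.decs ++ B2.decs)
      (decs_forestMul k lam A2 B2) W hW
    rw [hlist] at hd
    exact ⟨by rw [hd]; exact hCs.1, fun x => by rw [hd]; exact hCs.2 x⟩
  have e1 : mulADF k lam X Y (Finsupp.single ⟨Fp, hF⟩ 1) (Finsupp.single ⟨Gp, hG⟩ 1)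
      = toPureL k (X ⊕ Y) (forestMul lam (Fp.relabel Sum.inl) (Gp.relabel Sum.inr)) := by
    rw [mulADF_apply, inclL_single k ⟨Fp, hF⟩, inclR_single k ⟨Gp, hG⟩, rawMulL_single_single]
  have e2 : mulADF k lam Y Z (Finsupp.single ⟨Gp, hG⟩ 1) (Finsupp.single ⟨Hp, hH⟩ 1)
      = toPureL k (Y ⊕ Z) (forestMul lam (Gp.relabel Sum.inl) (Hp.relabel Sum.inr)) := by
    rw [mulADF_apply, inclL_single k ⟨Gp, hG⟩, inclR_single k ⟨Hp, hH⟩, rawMulL_single_single]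
  have cA : ((Fp.relabel Sum.inl).relabel Sum.inl).relabel (Equiv.sumAssoc X Y Z)
      = Fp.relabel Sum.inl := by
    rw [AForest.relabel_comp, AForest.relabel_comp]
    exact AForest.relabel_congr (fun x => by simp) Fp
  have cB : ((Gp.relabel Sum.inr).relabel Sum.inl).relabel (Equiv.sumAssoc X Y Z)
      = (Gp.relabel Sum.inl).relabel Sum.inr := by
    rw [AForest.relabel_comp, AForest.relabel_comp, AForest.relabel_comp]
    exact AForest.relabel_congr (fun y => by simp) Gp
  have cC : (Hp.relabel Sum.inr).relabel (Equiv.sumAssoc X Y Z)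
      = (Hp.relabel Sum.inr).relabel Sum.inr := by
    rw [AForest.relabel_comp, AForest.relabel_comp]
    exact AForest.relabel_congr (fun z => by simp) Hp
  rw [e1, e2, mulADF_apply (X := X ⊕ Y) (Y := Z) k lam, mulADF_apply (X := X) (Y := Y ⊕ Z) k lam,
    inclL_single k ⟨Fp, hF⟩, inclR_single k ⟨Hp, hH⟩, inclL_apply, inclR_apply,
    rawOf_toPure k _ hR1, rawOf_toPure k _ hR2,
    relabel_forestMul, relabel_forestMul,
    ADFmapL_apply, rawOf_toPure k _ hQ, rawRelabelL_apply, relabel_rawMulL,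
    relabel_forestMul, Finsupp.mapDomain_single,
    forestMul_assoc k lam, cA, cB, cC]
/-- The species `ADF`, equipped with the multiplications
`m_{X,Y} : ADF[X] ⊗ ADF[Y] → ADF[X ⊔ Y]`, `F ⊗ G ↦ F ⋄ G` and the unit `• ∈ ADF[∅]`,
is a twisted algebra: (i) equivariance, (ii) associativity, (iii) unitality. -/
theorem adf_twisted_algebra (lam : k) :
    -- (i) equivariance
    (∀ (X X' Y Y' : Type) [Fintype X] [Fintype X'] [Fintype Y] [Fintype Y']
        (σ : X ≃ X') (τ : Y ≃ Y') (F : ADF k X) (G : ADF k Y),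
        ADFmapL k (σ.sumCongr τ) (mulADF k lam X Y F G) =
          mulADF k lam X' Y' (ADFmapL k σ F) (ADFmapL k τ G))
    ∧
    -- (ii) associativity
    (∀ (X Y Z : Type) [Fintype X] [Fintype Y] [Fintype Z]
        (F : ADF k X) (G : ADF k Y) (H : ADF k Z),
        ADFmapL k (Equiv.sumAssoc X Y Z)
            (mulADF k lam (X ⊕ Y) Z (mulADF k lam X Y F G) H) =
          mulADF k lam X (Y ⊕ Z) F (mulADF k lam Y Z G H))
    ∧
    -- (iii) unitality
    (∀ (X : Type) [Fintype X] (F : ADF k X),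
        ADFmapL k (Equiv.emptySum Empty X)
            (mulADF k lam Empty X (bulletADF k Empty) F) = F
        ∧ ADFmapL k (Equiv.sumEmpty X Empty)
            (mulADF k lam X Empty F (bulletADF k Empty)) = F) := by
  refine ⟨?_, ?_, ?_⟩
  · -- (i) equivariance
    intro X X' Y Y' _ _ _ _ σ τ F G
    induction F using Finsupp.induction_linear with
    | zero => simp
    | add F₁ F₂ h₁ h₂ => simp only [map_add, LinearMap.add_apply, h₁, h₂]
    | single Fs a =>
      induction G using Finsupp.induction_linear with
      | zero => simp
      | add G₁ G₂ h₁ h₂ => simp only [map_add, h₁, h₂]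
      | single Gs b =>
        rw [← Finsupp.smul_single_one Fs a, ← Finsupp.smul_single_one Gs b]
        simp only [map_smul, LinearMap.smul_apply]
        obtain ⟨Fp, hF⟩ := Fs
        obtain ⟨Gp, hG⟩ := Gs
        have ha : (Finsupp.single (⟨Fp, hF⟩ : PureForest X) a)
            = a • Finsupp.single (⟨Fp, hF⟩ : PureForest X) 1 := by
          rw [Finsupp.smul_single, smul_eq_mul, mul_one]
        have hb : (Finsupp.single (⟨Gp, hG⟩ : PureForest Y) b)
            = b • Finsupp.single (⟨Gp, hG⟩ : PureForest Y) 1 := by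
          rw [Finsupp.smul_single, smul_eq_mul, mul_one]
        rw [core_equiv k lam σ τ Fp hF Gp hG]
  · -- (ii) associativity
    intro X Y Z _ _ _ F G H
    induction F using Finsupp.induction_linear with
    | zero => simp
    | add F₁ F₂ h₁ h₂ => simp only [map_add, LinearMap.add_apply, h₁, h₂]
    | single Fs a =>
      induction G using Finsupp.induction_linear with
      | zero => simp
      | add G₁ G₂ h₁ h₂ => simp only [map_add, LinearMap.add_apply, h₁, h₂]
      | single Gs b =>
        induction H using Finsupp.induction_linear with
        | zero => simp
        | add H₁ H₂ h₁ h₂ => simp only [map_add, h₁, h₂]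
        | single Hs c =>
          rw [← Finsupp.smul_single_one Fs a, ← Finsupp.smul_single_one Gs b,
            ← Finsupp.smul_single_one Hs c]
          simp only [map_smul, LinearMap.smul_apply]
          obtain ⟨Fp, hF⟩ := Fs
          obtain ⟨Gp, hG⟩ := Gs
          obtain ⟨Hp, hH⟩ := Hs
          have ha : (Finsupp.single (⟨Fp, hF⟩ : PureForest X) a)
              = a • Finsupp.single (⟨Fp, hF⟩ : PureForest X) 1 := by
            rw [Finsupp.smul_single, smul_eq_mul, mul_one]
          have hb : (Finsupp.single (⟨Gp, hG⟩ : PureForest Y) b)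
              = b • Finsupp.single (⟨Gp, hG⟩ : PureForest Y) 1 := by
            rw [Finsupp.smul_single, smul_eq_mul, mul_one]
          have hc : (Finsupp.single (⟨Hp, hH⟩ : PureForest Z) c)
              = c • Finsupp.single (⟨Hp, hH⟩ : PureForest Z) 1 := by
            rw [Finsupp.smul_single, smul_eq_mul, mul_one]
          rw [core_assoc k lam Fp hF Gp hG Hp hH]
  · -- (iii) unitality
    intro X _ F
    constructor
    · induction F using Finsupp.induction_linear with
      | zero => simp
      | add F₁ F₂ h₁ h₂ => simp only [map_add, h₁, h₂]
      | single Fs a =>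
        rw [← Finsupp.smul_single_one Fs a]
        simp only [map_smul]
        obtain ⟨Fp, hF⟩ := Fs
        have ha : (Finsupp.single (⟨Fp, hF⟩ : PureForest X) a)
            = a • Finsupp.single (⟨Fp, hF⟩ : PureForest X) 1 := by
          rw [Finsupp.smul_single, smul_eq_mul, mul_one]
        rw [core_unit_left k lam Fp hF]
    · induction F using Finsupp.induction_linear with
      | zero => simp
      | add F₁ F₂ h₁ h₂ => simp only [map_add, LinearMap.add_apply, h₁, h₂]
      | single Fs a =>
        rw [← Finsupp.smul_single_one Fs a]
        simp only [map_smul, LinearMap.smul_apply]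
        obtain ⟨Fp, hF⟩ := Fs
        have ha : (Finsupp.single (⟨Fp, hF⟩ : PureForest X) a)
            = a • Finsupp.single (⟨Fp, hF⟩ : PureForest X) 1 := by
          rw [Finsupp.smul_single, smul_eq_mul, mul_one]
        rw [core_unit_right k lam Fp hF]
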